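/- Let G be a cubic graph, let H be a maximum 3-edge-colorable subgraph of G properly colored with colors {1,2,3}, and let e = (u,v) be an edge of G not belonging to H. For a vertex w, let C(w) denote the set of colors appearing on the edges of H incident to w. Then |C(u) ∩ C(v)| = 1 and C(u) ∪ C(v) = {1,2,3}; in particular |C(u)| = |C(v)| = 2. -/

import Mathlib

/-- A multigraph on vertex type `V` with edge type `E`: each edge has a pair of
endpoints (an element of `Sym2 V`), and there are no loops.  Multiple edges
(distinct edges with the same endpoints) are allowed. -/
structure Multigraph (V : Type) (E : Type) where
  ends : E → Sym2 V
  no_loops : ∀ e : E, ¬ (ends e).IsDiag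

namespace Multigraph

variable {V E : Type}

/-- The degree of a vertex `v` inside the set `S` of edges:
the number of edges of `S` incident to `v`. -/
noncomputable def degreeIn (G : Multigraph V E) (S : Set E) (v : V) : ℕ :=
  {e ∈ S | v ∈ G.ends e}.ncard

/-- The degree of a vertex: the number of edges incident to it. -/
noncomputable def degree (G : Multigraph V E) (v : V) : ℕ :=
  G.degreeIn Set.univ v

/-- A cubic graph: every vertex has degree exactly `3`. -/
def IsCubic (G : Multigraph V E) : Prop :=
  ∀ v : V, G.degree v = 3

/-- Two edges are adjacent if they share an endpoint. -/
def EdgeAdj (G : Multigraph V E) (e f : E) : Prop :=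
  ∃ v : V, v ∈ G.ends e ∧ v ∈ G.ends f

/-- A set of edges is a matching if no two distinct edges of it share an endpoint. -/
def IsMatching (G : Multigraph V E) (M : Set E) : Prop :=
  ∀ e ∈ M, ∀ f ∈ M, e ≠ f → ¬ G.EdgeAdj e f

/-- A perfect matching (`1`-factor): a matching covering every vertex. -/
def IsPerfectMatching (G : Multigraph V E) (F : Set E) : Prop :=
  G.IsMatching F ∧ ∀ v : V, ∃ e ∈ F, v ∈ G.ends e

/-- A `2`-factor: a spanning subgraph in which every vertex has degree exactly `2`. -/
def Is2Factor (G : Multigraph V E) (F : Set E) : Prop :=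
  ∀ v : V, G.degreeIn F v = 2

/-- `c` is a proper edge coloring of the (spanning) subgraph with edge set `S`:
distinct adjacent edges of `S` get distinct colors. -/
def IsProperColoring (G : Multigraph V E) (S : Set E) {k : ℕ} (c : E → Fin k) : Prop :=
  ∀ e ∈ S, ∀ f ∈ S, e ≠ f → G.EdgeAdj e f → c e ≠ c f

/-- The (spanning) subgraph with edge set `S` is `k`-edge-colorable. -/
def Colorable (G : Multigraph V E) (k : ℕ) (S : Set E) : Prop :=
  ∃ c : E → Fin k, G.IsProperColoring S c

/-- `H` is (the edge set of) a maximum `k`-edge-colorable subgraph of `G`. -/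
def IsMaxColorable (G : Multigraph V E) (k : ℕ) (H : Set E) : Prop :=
  G.Colorable k H ∧ ∀ S : Set E, G.Colorable k S → S.ncard ≤ H.ncard

/-- `ν_k(G)`: the number of edges of a maximum `k`-edge-colorable subgraph of `G`. -/
noncomputable def nu (G : Multigraph V E) (k : ℕ) : ℕ :=
  sSup {n : ℕ | ∃ S : Set E, G.Colorable k S ∧ S.ncard = n}

/-- The set of colors appearing (under the coloring `c` of the subgraph `H`)
on the edges of `H` incident to the vertex `w`. -/
def colorsAt (G : Multigraph V E) (H : Set E) {k : ℕ} (c : E → Fin k) (w : V) :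
    Set (Fin k) :=
  {γ : Fin k | ∃ f ∈ H, w ∈ G.ends f ∧ c f = γ}

end Multigraph
namespace Aux

open Multigraph

variable {V E : Type}

lemma sym2_other {z : Sym2 V} {u : V} (h : u ∈ z) : ∃ w, z = s(u, w) := by
  induction z using Sym2.ind with
  | _ x y =>
    rcases Sym2.mem_iff.mp h with rfl | rfl
    · exact ⟨y, rfl⟩
    · exact ⟨x, Sym2.eq_swap.symm⟩

lemma edgeAdj_symm (G : Multigraph V E) {a b : E} (h : G.EdgeAdj a b) : G.EdgeAdj b a := by
  obtain ⟨z, h1, h2⟩ := h; exact ⟨z, h2, h1⟩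

lemma notColorable_insert [Fintype E] (G : Multigraph V E) {H : Set E}
    (hH : G.IsMaxColorable 3 H) {e : E} (he : e ∉ H) : ¬ G.Colorable 3 (insert e H) := by
  intro hcol
  have h1 := hH.2 _ hcol
  rw [Set.ncard_insert_of_notMem he (Set.toFinite H)] at h1
  omega

lemma colorsAt_eq_image (G : Multigraph V E) (H : Set E) {k : ℕ} (c : E → Fin k) (w : V) :
    G.colorsAt H c w = c '' {h ∈ H | w ∈ G.ends h} := by
  ext γ
  simp only [colorsAt, Set.mem_setOf_eq, Set.mem_image]
  tauto

lemma injOn_incident (G : Multigraph V E) {H : Set E} {k : ℕ} {c : E → Fin k}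
    (hc : G.IsProperColoring H c) (w : V) :
    Set.InjOn c {h ∈ H | w ∈ G.ends h} := by
  intro a ha b hb hab
  by_contra hne
  exact hc a ha.1 b hb.1 hne ⟨w, ha.2, hb.2⟩ hab

lemma ncard_colorsAt (G : Multigraph V E) {H : Set E} {k : ℕ} {c : E → Fin k}
    (hc : G.IsProperColoring H c) (w : V) :
    (G.colorsAt H c w).ncard = G.degreeIn H w := by
  rw [colorsAt_eq_image, Set.ncard_image_of_injOn (injOn_incident G hc w)]
  rfl

/-- degree in a subgraph missing one incident edge is at most 2 -/
lemma degreeIn_le_two [Fintype E] (G : Multigraph V E) (hG : G.IsCubic) {S : Set E}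
    {e : E} (he : e ∉ S) {u : V} (hu : u ∈ G.ends e) : G.degreeIn S u ≤ 2 := by
  have hsub : {h ∈ S | u ∈ G.ends h} ⊆ {h : E | u ∈ G.ends h} \ {e} := by
    rintro h ⟨hS, hm⟩
    exact ⟨hm, by rintro rfl; exact he hS⟩
  have hdeg : ({h : E | u ∈ G.ends h}).ncard = 3 := by
    have := hG u
    simpa [degree, degreeIn] using this
  calc G.degreeIn S u ≤ ({h : E | u ∈ G.ends h} \ {e}).ncard :=
        Set.ncard_le_ncard hsub (Set.toFinite _)
    _ = 3 - 1 := by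
        have hu' : e ∈ {h : E | u ∈ G.ends h} := hu
        rw [Set.ncard_diff_singleton_of_mem hu', hdeg]
    _ ≤ 2 := by omega

lemma union_colorsAt [Fintype E] (G : Multigraph V E) {H : Set E}
    (hH : G.IsMaxColorable 3 H) {c : E → Fin 3} (hc : G.IsProperColoring H c)
    {e : E} (he : e ∉ H) {u v : V} (hends : G.ends e = s(u, v)) :
    G.colorsAt H c u ∪ G.colorsAt H c v = Set.univ := by
  classical
  by_contra hne
  obtain ⟨γ, hγ⟩ : ∃ γ : Fin 3, γ ∉ G.colorsAt H c u ∪ G.colorsAt H c v := by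
    by_contra h
    push_neg at h
    exact hne (Set.eq_univ_of_forall h)
  apply notColorable_insert G hH he
  refine ⟨Function.update c e γ, ?_⟩
  have key : ∀ b ∈ H, G.EdgeAdj e b → Function.update c e γ b ≠ γ := by
    intro b hb hadj
    have hbe : b ≠ e := by rintro rfl; exact he hb
    rw [Function.update_of_ne hbe]
    obtain ⟨z, hz1, hz2⟩ := hadj
    rw [hends, Sym2.mem_iff] at hz1
    rcases hz1 with rfl | rfl
    · intro hcb; exact hγ (Or.inl ⟨b, hb, hz2, hcb⟩)
    · intro hcb; exact hγ (Or.inr ⟨b, hb, hz2, hcb⟩)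
  intro a ha b hb hab hadj
  rcases Set.mem_insert_iff.mp ha with rfl | haH
  · rcases Set.mem_insert_iff.mp hb with rfl | hbH
    · exact absurd rfl hab
    · rw [Function.update_self]
      exact fun h => key b hbH hadj h.symm
  · rcases Set.mem_insert_iff.mp hb with rfl | hbH
    · rw [Function.update_self]
      exact key a haH (edgeAdj_symm G hadj)
    · rw [Function.update_of_ne (by rintro rfl; exact he haH),
        Function.update_of_ne (by rintro rfl; exact he hbH)]
      exact hc a haH b hbH hab hadj

end Aux

namespace Aux

open Multigraph

variable {V E : Type}

/-- adjacency relation restricted to an edge set -/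
def rel (G : Multigraph V E) (A : Set E) (h h' : E) : Prop :=
  h ∈ A ∧ h' ∈ A ∧ G.EdgeAdj h h'

lemma rel_symm (G : Multigraph V E) (A : Set E) : Symmetric (rel G A) := by
  rintro a b ⟨h1, h2, h3⟩
  exact ⟨h2, h1, edgeAdj_symm G h3⟩

lemma comp_reach (G : Multigraph V E) {A : Set E} {f : E} (hf : f ∈ A) {b : E}
    (h : Relation.ReflTransGen (rel G A) f b) :
    b ∈ {h ∈ A | Relation.ReflTransGen (rel G A) f h} ∧
    Relation.ReflTransGen (rel G {h ∈ A | Relation.ReflTransGen (rel G A) f h}) f b := by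
  induction h with
  | refl => exact ⟨⟨hf, .refl⟩, .refl⟩
  | @tail c b hfc hcb ih =>
    have hb : b ∈ {h ∈ A | Relation.ReflTransGen (rel G A) f h} :=
      ⟨hcb.2.1, ih.1.2.tail hcb⟩
    exact ⟨hb, ih.2.tail ⟨ih.1, hb, hcb.2.2⟩⟩

lemma first_step (G : Multigraph V E) {A : Set E} {f : E} :
    ∀ {b}, Relation.ReflTransGen (rel G A) f b → b ≠ f →
      ∃ h1 ∈ A, h1 ≠ f ∧ G.EdgeAdj f h1 := by
  intro b h hbf
  induction h with
  | refl => exact absurd rfl hbf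
  | @tail c b hfc hcb ih =>
    by_cases hcf : c = f
    · exact ⟨b, hcb.2.1, hbf, hcf ▸ hcb.2.2⟩
    · exact ih hcf

lemma adj_share (G : Multigraph V E) {K : Set E} {f : E} {u w : V}
    (hfends : G.ends f = s(u, w))
    (hSu : {h ∈ K | u ∈ G.ends h} = {f}) :
    ∀ b ∈ K, b ≠ f → G.EdgeAdj f b → w ∈ G.ends b := by
  intro b hbK hbf hadj
  obtain ⟨z, hz1, hz2⟩ := hadj
  rw [hfends, Sym2.mem_iff] at hz1
  rcases hz1 with rfl | rfl
  · have : b ∈ {h ∈ K | z ∈ G.ends h} := ⟨hbK, hz2⟩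
    rw [hSu] at this
    exact absurd this hbf
  · exact hz2

lemma surgery (G : Multigraph V E) {K : Set E} {f : E} {u w : V}
    (hfends : G.ends f = s(u, w))
    (hSu : {h ∈ K | u ∈ G.ends h} = {f})
    {a : E} (haf : a ≠ f) :
    ∀ {b}, Relation.ReflTransGen (rel G K) a b →
      (b ≠ f → Relation.ReflTransGen (rel G (K \ {f})) a b) ∧
      (b = f → ∀ h ∈ K, h ≠ f → G.EdgeAdj f h →
        Relation.ReflTransGen (rel G (K \ {f})) a h) := by
  intro b h
  induction h with
  | refl => exact ⟨fun _ => .refl, fun hbf => absurd hbf haf⟩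
  | @tail c b hac hcb ih =>
    constructor
    · intro hbf
      by_cases hcf : c = f
      · exact ih.2 hcf b hcb.2.1 hbf (hcf ▸ hcb.2.2)
      · exact (ih.1 hcf).tail ⟨⟨hcb.1, hcf⟩, ⟨hcb.2.1, hbf⟩, hcb.2.2⟩
    · intro hbf h hhK hhf hadj
      by_cases hcf : c = f
      · exact ih.2 hcf h hhK hhf hadj
      · have hwc : w ∈ G.ends c :=
          adj_share G hfends hSu c hcb.1 hcf (edgeAdj_symm G (hbf ▸ hcb.2.2))
        have hwh : w ∈ G.ends h := adj_share G hfends hSu h hhK hhf hadj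
        exact (ih.1 hcf).tail ⟨⟨hcb.1, hcf⟩, ⟨hhK, hhf⟩, ⟨w, hwc, hwh⟩⟩

lemma pendant (G : Multigraph V E) [Fintype E] :
    ∀ (n : ℕ) (K : Set E), K.ncard = n →
      (∀ a ∈ K, ∀ b ∈ K, Relation.ReflTransGen (rel G K) a b) →
      (∀ y : V, G.degreeIn K y ≤ 2) →
      ∀ u v x : V, G.degreeIn K u = 1 → G.degreeIn K v = 1 → G.degreeIn K x = 1 →
      u ≠ v → u ≠ x → v ≠ x → False := by
  intro n
  induction n using Nat.strong_induction_on with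
  | _ n ih =>
    intro K hn hconn hdeg u v x hu hv hx huv hux hvx
    simp only [Multigraph.degreeIn] at hu hv hx hdeg
    obtain ⟨f, hSu⟩ := Set.ncard_eq_one.mp hu
    have hfK : f ∈ K ∧ u ∈ G.ends f := by
      have : f ∈ {h ∈ K | u ∈ G.ends h} := by rw [hSu]; exact Set.mem_singleton f
      exact this
    obtain ⟨w, hfends⟩ := sym2_other hfK.2
    have huw : u ≠ w := fun h => G.no_loops f (by rw [hfends]; exact Sym2.mk_isDiag_iff.mpr h)
    have hwf : w ∈ G.ends f := by rw [hfends]; exact Sym2.mem_iff.mpr (Or.inr rfl)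
    by_cases hK1 : ∀ h ∈ K, h = f
    · have hmem : ∀ y : V, ({h ∈ K | y ∈ G.ends h}).ncard = 1 → y ∈ G.ends f := by
        intro y hy
        obtain ⟨b, hSb⟩ := Set.ncard_eq_one.mp hy
        have hb : b ∈ {h ∈ K | y ∈ G.ends h} := by rw [hSb]; exact Set.mem_singleton b
        have hbf := hK1 b hb.1
        exact hbf ▸ hb.2
      have hvf := hmem v hv
      have hxf := hmem x hx
      rw [hfends, Sym2.mem_iff] at hvf hxf
      rcases hvf with rfl | rfl
      · exact huv rfl
      · rcases hxf with rfl | rfl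
        · exact hux rfl
        · exact hvx rfl
    · push_neg at hK1
      obtain ⟨h0, hh0K, hh0f⟩ := hK1
      obtain ⟨h1, hh1K, hh1f, hadj⟩ := first_step G (hconn f hfK.1 h0 hh0K) hh0f
      have hwh1 : w ∈ G.ends h1 := adj_share G hfends hSu h1 hh1K hh1f hadj
      have hwv : w ≠ v := by
        rintro rfl
        have : 1 < ({h ∈ K | w ∈ G.ends h}).ncard :=
          (Set.one_lt_ncard (Set.toFinite _)).mpr
            ⟨f, ⟨hfK.1, hwf⟩, h1, ⟨hh1K, hwh1⟩, fun h => hh1f h.symm⟩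
        omega
      have hwx : w ≠ x := by
        rintro rfl
        have : 1 < ({h ∈ K | w ∈ G.ends h}).ncard :=
          (Set.one_lt_ncard (Set.toFinite _)).mpr
            ⟨f, ⟨hfK.1, hwf⟩, h1, ⟨hh1K, hwh1⟩, fun h => hh1f h.symm⟩
        omega
      have hdegw2 : 1 < ({h ∈ K | w ∈ G.ends h}).ncard :=
        (Set.one_lt_ncard (Set.toFinite _)).mpr
          ⟨f, ⟨hfK.1, hwf⟩, h1, ⟨hh1K, hwh1⟩, fun h => hh1f h.symm⟩
      have hnpos : 0 < n := by
        rw [← hn]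
        exact Set.ncard_pos (Set.toFinite _) |>.mpr ⟨f, hfK.1⟩
      refine ih (n - 1) (by omega) (K \ {f}) ?_ ?_ ?_ w v x ?_ ?_ ?_ hwv hwx hvx
      · rw [Set.ncard_diff_singleton_of_mem hfK.1, hn]
      · rintro a ⟨haK, haf⟩ b ⟨hbK, hbf⟩
        exact (surgery G hfends hSu haf (hconn a haK b hbK)).1 hbf
      · intro y
        refine le_trans (Set.ncard_le_ncard ?_ (Set.toFinite _)) (hdeg y)
        rintro h ⟨⟨hK, _⟩, hm⟩
        exact ⟨hK, hm⟩
      · -- degree of w in K' is 1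
        show ({h ∈ K \ {f} | w ∈ G.ends h}).ncard = 1
        have heq : {h ∈ K \ {f} | w ∈ G.ends h} = {h ∈ K | w ∈ G.ends h} \ {f} := by
          ext h
          simp only [Set.mem_setOf_eq, Set.mem_diff, Set.mem_singleton_iff]
          tauto
        rw [heq, Set.ncard_diff_singleton_of_mem
          (show f ∈ {h ∈ K | w ∈ G.ends h} from ⟨hfK.1, hwf⟩)]
        have hle := hdeg w
        omega
      · show ({h ∈ K \ {f} | v ∈ G.ends h}).ncard = 1
        have hvnf : v ∉ G.ends f := by
          rw [hfends, Sym2.mem_iff]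
          rintro (rfl | rfl)
          · exact huv rfl
          · exact hwv rfl
        have heq : {h ∈ K \ {f} | v ∈ G.ends h} = {h ∈ K | v ∈ G.ends h} := by
          ext h
          simp only [Set.mem_setOf_eq, Set.mem_diff, Set.mem_singleton_iff]
          constructor
          · rintro ⟨⟨h1, _⟩, h2⟩; exact ⟨h1, h2⟩
          · rintro ⟨h1, h2⟩
            exact ⟨⟨h1, fun hf => hvnf (hf ▸ h2)⟩, h2⟩
        rw [heq, hv]
      · show ({h ∈ K \ {f} | x ∈ G.ends h}).ncard = 1
        have hxnf : x ∉ G.ends f := by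
          rw [hfends, Sym2.mem_iff]
          rintro (rfl | rfl)
          · exact hux rfl
          · exact hwx rfl
        have heq : {h ∈ K \ {f} | x ∈ G.ends h} = {h ∈ K | x ∈ G.ends h} := by
          ext h
          simp only [Set.mem_setOf_eq, Set.mem_diff, Set.mem_singleton_iff]
          constructor
          · rintro ⟨⟨h1, _⟩, h2⟩; exact ⟨h1, h2⟩
          · rintro ⟨h1, h2⟩
            exact ⟨⟨h1, fun hf => hxnf (hf ▸ h2)⟩, h2⟩
        rw [heq, hx]

end Aux

namespace Aux

open Multigraph

variable {V E : Type}

lemma core [Fintype V] [Fintype E] (G : Multigraph V E) (hG : G.IsCubic)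
    (H : Set E) (hH : G.IsMaxColorable 3 H)
    (c : E → Fin 3) (hc : G.IsProperColoring H c)
    (e : E) (he : e ∉ H) (u v : V) (hends : G.ends e = s(u, v)) :
    (G.colorsAt H c u).ncard = 2 := by
  classical
  by_contra hcu2
  have hue : u ∈ G.ends e := by rw [hends]; exact Sym2.mem_iff.mpr (Or.inl rfl)
  have hve : v ∈ G.ends e := by rw [hends]; exact Sym2.mem_iff.mpr (Or.inr rfl)
  have huv : u ≠ v := fun h => G.no_loops e (by rw [hends]; exact Sym2.mk_isDiag_iff.mpr h)
  have hdu : (G.colorsAt H c u).ncard ≤ 2 := by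
    rw [ncard_colorsAt G hc]; exact degreeIn_le_two G hG he hue
  have hdv : (G.colorsAt H c v).ncard ≤ 2 := by
    rw [ncard_colorsAt G hc]; exact degreeIn_le_two G hG he hve
  have hunion := union_colorsAt G hH hc he hends
  have huniv3 : (Set.univ : Set (Fin 3)).ncard = 3 := by simp [Set.ncard_univ]
  have h3 : 3 ≤ (G.colorsAt H c u).ncard + (G.colorsAt H c v).ncard := by
    calc 3 = (G.colorsAt H c u ∪ G.colorsAt H c v).ncard := by rw [hunion, huniv3]
      _ ≤ _ := Set.ncard_union_le _ _
  have hcu1 : (G.colorsAt H c u).ncard = 1 := by omega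
  have hdegu : ({h ∈ H | u ∈ G.ends h}).ncard = 1 := by
    have := ncard_colorsAt G hc (H := H) u
    rw [hcu1] at this
    exact this.symm
  obtain ⟨f, hSu⟩ := Set.ncard_eq_one.mp hdegu
  have hfmem : f ∈ {h ∈ H | u ∈ G.ends h} := by rw [hSu]; exact Set.mem_singleton f
  set α := c f with hα
  have hCu : G.colorsAt H c u = {α} := by
    rw [colorsAt_eq_image, hSu, Set.image_singleton]
  have hαv : α ∉ G.colorsAt H c v := by
    intro hmem
    have hsub : G.colorsAt H c u ∪ G.colorsAt H c v = G.colorsAt H c v := by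
      rw [hCu]
      exact Set.union_eq_self_of_subset_left (Set.singleton_subset_iff.mpr hmem)
    rw [hsub.symm.trans hunion, huniv3] at hdv
    omega
  have hCv : ∀ γ : Fin 3, γ ≠ α → γ ∈ G.colorsAt H c v := by
    intro γ hγ
    have : γ ∈ G.colorsAt H c u ∪ G.colorsAt H c v := hunion ▸ Set.mem_univ γ
    rcases this with h | h
    · rw [hCu, Set.mem_singleton_iff] at h; exact absurd h hγ
    · exact h
  -- third edge g at u
  have hdegu3 : ({h : E | u ∈ G.ends h}).ncard = 3 := by
    simpa [Multigraph.degree, Multigraph.degreeIn] using hG u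
  have hef : e ≠ f := fun h => he (h ▸ hfmem.1)
  obtain ⟨g, hgu, hge, hgf⟩ : ∃ g, g ∈ {h : E | u ∈ G.ends h} ∧ g ≠ e ∧ g ≠ f := by
    by_contra hcon
    push_neg at hcon
    have hsub : {h : E | u ∈ G.ends h} ⊆ {e, f} := by
      intro h hh
      by_cases he' : h = e
      · exact Or.inl he'
      · exact Or.inr (hcon h hh he')
    have h1 := Set.ncard_le_ncard hsub (Set.toFinite _)
    have h2 : ({e, f} : Set E).ncard ≤ 2 :=
      (Set.ncard_insert_le _ _).trans (by simp)
    omega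
  have hgH : g ∉ H := by
    intro hmem
    have : g ∈ {h ∈ H | u ∈ G.ends h} := ⟨hmem, hgu⟩
    rw [hSu] at this
    exact hgf this
  obtain ⟨x, hgends⟩ := sym2_other hgu
  have hux : u ≠ x := fun h => G.no_loops g (by rw [hgends]; exact Sym2.mk_isDiag_iff.mpr h)
  have hxg : x ∈ G.ends g := by rw [hgends]; exact Sym2.mem_iff.mpr (Or.inr rfl)
  have hunion_g := union_colorsAt G hH hc hgH hgends
  have hdx : (G.colorsAt H c x).ncard ≤ 2 := by
    rw [ncard_colorsAt G hc]; exact degreeIn_le_two G hG hgH hxg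
  have hαx : α ∉ G.colorsAt H c x := by
    intro hmem
    have huniv : G.colorsAt H c x = Set.univ := by
      apply Set.eq_univ_of_forall
      intro γ
      have : γ ∈ G.colorsAt H c u ∪ G.colorsAt H c x := hunion_g ▸ Set.mem_univ γ
      rcases this with h | h
      · rw [hCu, Set.mem_singleton_iff] at h; exact h ▸ hmem
      · exact h
    rw [huniv, huniv3] at hdx
    omega
  have hCx : ∀ γ : Fin 3, γ ≠ α → γ ∈ G.colorsAt H c x := by
    intro γ hγ
    have : γ ∈ G.colorsAt H c u ∪ G.colorsAt H c x := hunion_g ▸ Set.mem_univ γ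
    rcases this with h | h
    · rw [hCu, Set.mem_singleton_iff] at h; exact absurd h hγ
    · exact h
  obtain ⟨β, γ0, hβα, hγ0α, hβγ0⟩ : ∃ β γ0 : Fin 3, β ≠ α ∧ γ0 ≠ α ∧ β ≠ γ0 := by
    have hdec : ∀ a : Fin 3, ∃ b g0 : Fin 3, b ≠ a ∧ g0 ≠ a ∧ b ≠ g0 := by decide
    exact hdec α
  -- v ≠ x
  have hvx : v ≠ x := by
    rintro rfl
    have hsub : {h ∈ H | v ∈ G.ends h} ⊆ {h : E | v ∈ G.ends h} \ {e, g} := by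
      rintro h ⟨hH', hm⟩
      refine ⟨hm, ?_⟩
      rintro (rfl | rfl)
      · exact he hH'
      · exact hgH hH'
    have hdeg3v : ({h : E | v ∈ G.ends h}).ncard = 3 := by
      simpa [Multigraph.degree, Multigraph.degreeIn] using hG v
    have hsub2 : ({e, g} : Set E) ⊆ {h : E | v ∈ G.ends h} := by
      rintro h (rfl | rfl)
      · exact hve
      · exact hxg
    have hcard : ({h : E | v ∈ G.ends h} \ {e, g}).ncard = 1 := by
      rw [Set.ncard_diff hsub2 (Set.toFinite _), hdeg3v, Set.ncard_pair (fun h => hge h.symm)]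
    have hle : ({h ∈ H | v ∈ G.ends h}).ncard ≤ 1 := by
      rw [← hcard]
      exact Set.ncard_le_ncard hsub (Set.toFinite _)
    have h2v : 1 < (G.colorsAt H c v).ncard := by
      apply (Set.one_lt_ncard (Set.toFinite _)).mpr
      exact ⟨β, hCv β hβα, γ0, hCv γ0 hγ0α, hβγ0⟩
    rw [ncard_colorsAt G hc] at h2v
    have : G.degreeIn H v = ({h ∈ H | v ∈ G.ends h}).ncard := rfl
    omega
  -- the α-β subgraph
  set A := {h ∈ H | c h = α ∨ c h = β} with hA
  have hfA : f ∈ A := ⟨hfmem.1, Or.inl rfl⟩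
  have hdegA : ∀ y : V, ({h ∈ A | y ∈ G.ends h}).ncard ≤ 2 := by
    intro y
    have hsub : {h ∈ A | y ∈ G.ends h} ⊆ {h ∈ H | y ∈ G.ends h} := by
      rintro h ⟨⟨h1, _⟩, h2⟩; exact ⟨h1, h2⟩
    have hinj := (injOn_incident G hc y).mono hsub
    rw [← Set.ncard_image_of_injOn hinj]
    have himg : c '' {h ∈ A | y ∈ G.ends h} ⊆ {α, β} := by
      rintro γ ⟨h, ⟨⟨_, hor⟩, _⟩, rfl⟩
      rcases hor with h' | h' <;> simp [h']
    exact (Set.ncard_le_ncard himg (Set.toFinite _)).trans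
      ((Set.ncard_insert_le _ _).trans (by simp))
  have hAu : {h ∈ A | u ∈ G.ends h} = {f} := by
    apply Set.eq_singleton_iff_unique_mem.mpr
    refine ⟨⟨hfA, hfmem.2⟩, fun h hh => ?_⟩
    have : h ∈ {h ∈ H | u ∈ G.ends h} := ⟨hh.1.1, hh.2⟩
    rw [hSu] at this
    exact this
  have hAdeg1 : ∀ y : V, α ∉ G.colorsAt H c y → β ∈ G.colorsAt H c y →
      ∃ b, {h ∈ A | y ∈ G.ends h} = {b} := by
    intro y hαy hβy
    obtain ⟨b, hbH, hby, hcb⟩ := hβy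
    refine ⟨b, Set.eq_singleton_iff_unique_mem.mpr ⟨⟨⟨hbH, Or.inr hcb⟩, hby⟩, ?_⟩⟩
    rintro h ⟨⟨hhH, hor⟩, hhy⟩
    have hch : c h = β := by
      rcases hor with h' | h'
      · exact absurd ⟨h, hhH, hhy, h'⟩ hαy
      · exact h'
    exact injOn_incident G hc y ⟨hhH, hhy⟩ ⟨hbH, hby⟩ (hch.trans hcb.symm)
  obtain ⟨bv, hAv⟩ := hAdeg1 v hαv (hCv β hβα)
  obtain ⟨bx, hAx⟩ := hAdeg1 x hαx (hCx β hβα)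
  -- component of f in A
  set K := {h ∈ A | Relation.ReflTransGen (rel G A) f h} with hK
  have hfK : f ∈ K := ⟨hfA, .refl⟩
  have hKA : K ⊆ A := fun h hh => hh.1
  have hconnK : ∀ a ∈ K, ∀ b ∈ K, Relation.ReflTransGen (rel G K) a b := by
    intro a ha b hb
    have h1 := (comp_reach G hfA ha.2).2
    have h2 := (comp_reach G hfA hb.2).2
    exact (show Relation.ReflTransGen (rel G K) a f from by
      haveI : Std.Symm (rel G K) := ⟨fun x y h => rel_symm G K h⟩
      apply Std.Symm.symm; exact h1).trans h2
  -- the swapped coloring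
  set π := Equiv.swap α β with hπ
  set c' : E → Fin 3 := fun h => if h ∈ K then π (c h) else c h with hc'def
  have hc'K : ∀ h ∈ K, (c' h = β ∧ c h = α) ∨ (c' h = α ∧ c h = β) := by
    intro h hh
    rcases (hKA hh).2 with h' | h'
    · exact Or.inl ⟨by simp [hc'def, hh, h', hπ, Equiv.swap_apply_left], h'⟩
    · exact Or.inr ⟨by simp [hc'def, hh, h', hπ, Equiv.swap_apply_right], h'⟩
  have hc'nK : ∀ h, h ∉ K → c' h = c h := by
    intro h hh; simp [hc'def, hh]
  have hnotA : ∀ p q : E, p ∈ K → q ∈ H → q ∉ K → G.EdgeAdj p q →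
      c q ≠ α ∧ c q ≠ β := by
    intro p q hpK hqH hqK hpq
    constructor <;> intro hcq <;> exact hqK
      ⟨⟨hqH, by tauto⟩, hpK.2.tail ⟨hpK.1, ⟨hqH, by tauto⟩, hpq⟩⟩
  have hc'proper : G.IsProperColoring H c' := by
    intro a ha b hb hab hadj
    by_cases haK : a ∈ K <;> by_cases hbK : b ∈ K
    · have h1 : c' a = π (c a) := by simp [hc'def, haK]
      have h2 : c' b = π (c b) := by simp [hc'def, hbK]
      rw [h1, h2]
      exact fun hfalse => hc a ha b hb hab hadj (π.injective hfalse)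
    · obtain ⟨h1, h2⟩ := hnotA a b haK hb hbK hadj
      rw [hc'nK b hbK]
      rcases hc'K a haK with ⟨h', _⟩ | ⟨h', _⟩ <;> rw [h']
      · exact fun hh => h2 hh.symm
      · exact fun hh => h1 hh.symm
    · obtain ⟨h1, h2⟩ := hnotA b a hbK ha haK (edgeAdj_symm G hadj)
      rw [hc'nK a haK]
      rcases hc'K b hbK with ⟨h', _⟩ | ⟨h', _⟩ <;> rw [h']
      · exact h2
      · exact h1
    · rw [hc'nK a haK, hc'nK b hbK]
      exact hc a ha b hb hab hadj
  have hc'f : c' f = β := by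
    rcases hc'K f hfK with ⟨h1, _⟩ | ⟨_, h2⟩
    · exact h1
    · exact absurd h2.symm hβα
  -- the recoloring argument
  have recolor : ∀ (e' : E) (y : V), e' ∉ H → G.ends e' = s(u, y) →
      ¬(∃ h ∈ K, y ∈ G.ends h) → α ∉ G.colorsAt H c y → False := by
    intro e' y he' hends' hytouch hαy
    apply notColorable_insert G hH he'
    refine ⟨Function.update c' e' α, ?_⟩
    have key : ∀ b ∈ H, G.EdgeAdj e' b → Function.update c' e' α b ≠ α := by
      intro b hb hadj
      have hbe : b ≠ e' := by rintro rfl; exact he' hb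
      rw [Function.update_of_ne hbe]
      obtain ⟨z, hz1, hz2⟩ := hadj
      rw [hends', Sym2.mem_iff] at hz1
      rcases hz1 with rfl | rfl
      · have : b ∈ {h ∈ H | z ∈ G.ends h} := ⟨hb, hz2⟩
        rw [hSu] at this
        rw [this, hc'f]
        exact hβα
      · have hbK : b ∉ K := fun hh => hytouch ⟨b, hh, hz2⟩
        rw [hc'nK b hbK]
        exact fun hcb => hαy ⟨b, hb, hz2, hcb⟩
    intro a ha b hb hab hadj
    rcases Set.mem_insert_iff.mp ha with rfl | haH
    · rcases Set.mem_insert_iff.mp hb with rfl | hbH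
      · exact absurd rfl hab
      · rw [Function.update_self]
        exact fun h => key b hbH hadj h.symm
    · rcases Set.mem_insert_iff.mp hb with rfl | hbH
      · rw [Function.update_self]
        exact key a haH (edgeAdj_symm G hadj)
      · rw [Function.update_of_ne (by rintro rfl; exact he' haH),
          Function.update_of_ne (by rintro rfl; exact he' hbH)]
        exact hc'proper a haH b hbH hab hadj
  by_cases hvtouch : ∃ h ∈ K, v ∈ G.ends h
  · by_cases hxtouch : ∃ h ∈ K, x ∈ G.ends h
    · -- pendant contradiction
      have hKdeg : ∀ y : V, G.degreeIn K y ≤ 2 := by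
        intro y
        refine le_trans (Set.ncard_le_ncard ?_ (Set.toFinite _)) (hdegA y)
        rintro h ⟨hhK, hm⟩
        exact ⟨hKA hhK, hm⟩
      have hKu : G.degreeIn K u = 1 := by
        show ({h ∈ K | u ∈ G.ends h}).ncard = 1
        have : {h ∈ K | u ∈ G.ends h} = {f} := by
          apply Set.eq_singleton_iff_unique_mem.mpr
          refine ⟨⟨hfK, hfmem.2⟩, fun h hh => ?_⟩
          have : h ∈ {h ∈ A | u ∈ G.ends h} := ⟨hKA hh.1, hh.2⟩
          rw [hAu] at this
          exact this
        rw [this, Set.ncard_singleton]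
      have hKv : G.degreeIn K v = 1 := by
        show ({h ∈ K | v ∈ G.ends h}).ncard = 1
        obtain ⟨h0, hh0K, hh0v⟩ := hvtouch
        have : {h ∈ K | v ∈ G.ends h} = {h0} := by
          apply Set.eq_singleton_iff_unique_mem.mpr
          refine ⟨⟨hh0K, hh0v⟩, fun h hh => ?_⟩
          have ha : h ∈ {h ∈ A | v ∈ G.ends h} := ⟨hKA hh.1, hh.2⟩
          have hb : h0 ∈ {h ∈ A | v ∈ G.ends h} := ⟨hKA hh0K, hh0v⟩
          rw [hAv] at ha hb
          rw [ha, hb]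
        rw [this, Set.ncard_singleton]
      have hKx : G.degreeIn K x = 1 := by
        show ({h ∈ K | x ∈ G.ends h}).ncard = 1
        obtain ⟨h0, hh0K, hh0x⟩ := hxtouch
        have : {h ∈ K | x ∈ G.ends h} = {h0} := by
          apply Set.eq_singleton_iff_unique_mem.mpr
          refine ⟨⟨hh0K, hh0x⟩, fun h hh => ?_⟩
          have ha : h ∈ {h ∈ A | x ∈ G.ends h} := ⟨hKA hh.1, hh.2⟩
          have hb : h0 ∈ {h ∈ A | x ∈ G.ends h} := ⟨hKA hh0K, hh0x⟩
          rw [hAx] at ha hb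
          rw [ha, hb]
        rw [this, Set.ncard_singleton]
      exact pendant G K.ncard K rfl hconnK hKdeg u v x hKu hKv hKx huv hux hvx
    · exact recolor g x hgH hgends hxtouch hαx
  · exact recolor e v he hends hvtouch hαv

end Aux


/-- Let `H` be a maximum 3-edge-colorable subgraph of a cubic graph `G`,
properly colored by `c` with the three colors, and let `e = (u,v)` be an edge of `G`
not in `H`.  Writing `C(w)` for the set of colors on edges of `H` incident to `w`,
we have `|C(u) ∩ C(v)| = 1`, `C(u) ∪ C(v) = {1,2,3}`, and `|C(u)| = |C(v)| = 2`. -/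
theorem colors_at_endpoints_of_uncolored_edge
    {V E : Type} [Fintype V] [Fintype E] (G : Multigraph V E) (hG : G.IsCubic)
    (H : Set E) (hH : G.IsMaxColorable 3 H)
    (c : E → Fin 3) (hc : G.IsProperColoring H c)
    (e : E) (he : e ∉ H) (u v : V) (hends : G.ends e = s(u, v)) :
    (G.colorsAt H c u ∩ G.colorsAt H c v).ncard = 1 ∧
    G.colorsAt H c u ∪ G.colorsAt H c v = Set.univ ∧
    (G.colorsAt H c u).ncard = 2 ∧ (G.colorsAt H c v).ncard = 2 := by
  have hends' : G.ends e = s(v, u) := hends.trans Sym2.eq_swap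
  have h2u := Aux.core G hG H hH c hc e he u v hends
  have h2v := Aux.core G hG H hH c hc e he v u hends'
  have hunion := Aux.union_colorsAt G hH hc he hends
  have hinter : (G.colorsAt H c u ∩ G.colorsAt H c v).ncard = 1 := by
    have hie := Set.ncard_inter_add_ncard_union (G.colorsAt H c u) (G.colorsAt H c v)
      (Set.toFinite _) (Set.toFinite _)
    have huniv3 : (Set.univ : Set (Fin 3)).ncard = 3 := by simp [Set.ncard_univ]
    rw [hunion, h2u, h2v, huniv3] at hie
    omega
  exact ⟨hinter, hunion, h2u, h2v⟩
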